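/- Let C ⊆ ℝⁿ be an open convex cone and f : C ∩ ℚⁿ → ℝ≥0 a function satisfying (i) f(q·x) = q·f(x) for all positive rationals q and x ∈ C ∩ ℚⁿ, (ii) f(x+y) ≤ f(x) + f(y) for all x, y ∈ C ∩ ℚⁿ, and (iii) there is a basis a₁,…,aₙ of ℚⁿ contained in C with f(aᵢ) = 0 for all i. Then for every x ∈ C there exist a compact neighborhood K ⊆ C of x and a constant M > 0 such that |f(x₁) − f(x₂)| ≤ M·‖x₁ − x₂‖ for all rational points x₁, x₂ ∈ K. -/

import Mathlib

/-- A point of `ℝⁿ` all of whose coordinates are rational. -/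
def IsRatPoint {n : ℕ} (x : Fin n → ℝ) : Prop := ∀ i, ∃ q : ℚ, x i = (q : ℝ)

lemma IsRatPoint.add {n : ℕ} {x y : Fin n → ℝ} (hx : IsRatPoint x) (hy : IsRatPoint y) :
    IsRatPoint (x + y) := by
  intro i
  obtain ⟨q, hq⟩ := hx i; obtain ⟨r, hr⟩ := hy i
  exact ⟨q + r, by simp [hq, hr]⟩

lemma IsRatPoint.sub {n : ℕ} {x y : Fin n → ℝ} (hx : IsRatPoint x) (hy : IsRatPoint y) :
    IsRatPoint (x - y) := by
  intro i
  obtain ⟨q, hq⟩ := hx i; obtain ⟨r, hr⟩ := hy i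
  exact ⟨q - r, by simp [hq, hr]⟩

lemma IsRatPoint.qsmul {n : ℕ} {x : Fin n → ℝ} (hx : IsRatPoint x) (q : ℚ) :
    IsRatPoint ((q : ℝ) • x) := by
  intro i
  obtain ⟨r, hr⟩ := hx i
  exact ⟨q * r, by simp [hr]⟩

lemma exists_ratPoint_near {n : ℕ} (x : Fin n → ℝ) {ε : ℝ} (hε : 0 < ε) :
    ∃ p : Fin n → ℝ, IsRatPoint p ∧ ‖p - x‖ < ε := by
  have h : ∀ i, ∃ q : ℚ, |x i - (q:ℝ)| < ε / 2 := fun i => exists_rat_near (x i) (half_pos hε)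
  choose q hq using h
  refine ⟨fun i => (q i : ℝ), fun i => ⟨q i, rfl⟩, ?_⟩
  rw [pi_norm_lt_iff hε]
  intro i
  have := hq i
  rw [Real.norm_eq_abs]
  calc |((q i : ℝ)) - x i| = |x i - q i| := abs_sub_comm _ _
    _ < ε / 2 := this
    _ < ε := by linarith

lemma rat_coords {n : ℕ} (a : Fin n → (Fin n → ℝ)) (haQ : ∀ i, IsRatPoint (a i))
    (hbasis : LinearIndependent ℝ a) [Nonempty (Fin n)]
    (b : Module.Basis (Fin n) ℝ (Fin n → ℝ)) (hb : ⇑b = a) :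
    ∀ w : Fin n → ℝ, IsRatPoint w → ∃ c : Fin n → ℚ, ∀ i, b.repr w i = (c i : ℝ) := by
  classical
  have haQ' : ∀ i j, ∃ q : ℚ, a i j = (q : ℝ) := fun i => haQ i
  choose aq haq using haQ'
  let J : (Fin n → ℚ) →ₗ[ℚ] (Fin n → ℝ) := LinearMap.compLeft (Algebra.linearMap ℚ ℝ) (Fin n)
  have hJ : ∀ (p : Fin n → ℚ) (j : Fin n), J p j = (p j : ℝ) := by
    intro p j; simp [J, LinearMap.compLeft, Algebra.linearMap, algebraMap]
  have hJa : ∀ i, J (aq i) = a i := by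
    intro i; funext j; rw [hJ, haq]
  have haQind : LinearIndependent ℚ a :=
    hbasis.restrict_scalars (by intro r s h; simpa using h)
  have haqind : LinearIndependent ℚ aq := by
    apply LinearIndependent.of_comp J
    have : ⇑J ∘ aq = a := funext hJa
    rwa [this]
  have hcard : Fintype.card (Fin n) = Module.finrank ℚ (Fin n → ℚ) := by
    simp [Module.finrank_fin_fun]
  let bq : Module.Basis (Fin n) ℚ (Fin n → ℚ) := basisOfLinearIndependentOfCardEqFinrank haqind hcard
  intro w hw
  choose wq hwq using hw
  have hJw : J wq = w := by funext j; rw [hJ, hwq]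
  refine ⟨fun i => bq.repr wq i, ?_⟩
  have hsum : ∑ i, bq.repr wq i • bq i = wq := bq.sum_repr wq
  have hwrep : w = ∑ i, ((bq.repr wq i : ℝ)) • b i := by
    conv_lhs => rw [← hJw, ← hsum]
    rw [map_sum]
    refine Finset.sum_congr rfl fun i _ => ?_
    rw [map_smul, show ⇑bq = aq from coe_basisOfLinearIndependentOfCardEqFinrank haqind hcard,
      hJa, hb]
    rfl
  intro i
  rw [hwrep]
  rw [show (∑ i, ((bq.repr wq i : ℝ)) • b i) = ∑ i, (fun i => ((bq.repr wq i : ℝ))) i • b i from rfl]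
  rw [Module.Basis.repr_sum_self]

set_option maxHeartbeats 2000000 in
theorem stmt0 {n : ℕ} (C : Set (Fin n → ℝ)) (f : (Fin n → ℝ) → ℝ)
    (hopen : IsOpen C)
    (hcone : ∀ x ∈ C, ∀ c : ℝ, 0 < c → c • x ∈ C)
    (hadd : ∀ x ∈ C, ∀ y ∈ C, x + y ∈ C)
    (hnonneg : ∀ x ∈ C, IsRatPoint x → 0 ≤ f x)
    (hhom : ∀ x ∈ C, IsRatPoint x → ∀ q : ℚ, 0 < q → f ((q : ℝ) • x) = (q : ℝ) * f x)
    (hsub : ∀ x ∈ C, ∀ y ∈ C, IsRatPoint x → IsRatPoint y → f (x + y) ≤ f x + f y)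
    (a : Fin n → (Fin n → ℝ))
    (haC : ∀ i, a i ∈ C) (haQ : ∀ i, IsRatPoint (a i))
    (hbasis : LinearIndependent ℝ a)
    (hzero : ∀ i, f (a i) = 0) :
    ∀ x ∈ C, ∃ K : Set (Fin n → ℝ), IsCompact K ∧ K ⊆ C ∧ K ∈ nhds x ∧
      ∃ M : ℝ, 0 < M ∧ ∀ x₁ ∈ K, ∀ x₂ ∈ K, IsRatPoint x₁ → IsRatPoint x₂ →
        |f x₁ - f x₂| ≤ M * ‖x₁ - x₂‖ := by
  classical
  intro x hx
  rcases Nat.eq_zero_or_pos n with hn | hn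
  · -- trivial case n = 0
    subst hn
    have hxall : ∀ y : Fin 0 → ℝ, y = x := fun y => funext fun i => i.elim0
    refine ⟨{x}, isCompact_singleton, by simpa using hx, ?_, 1, one_pos, ?_⟩
    · have : ({x} : Set (Fin 0 → ℝ)) = Set.univ := Set.eq_univ_iff_forall.mpr fun y => hxall y
      rw [this]; exact Filter.univ_mem
    · intro x₁ _ x₂ _ _ _
      rw [hxall x₁, hxall x₂]
      simp
  haveI : Nonempty (Fin n) := ⟨⟨0, hn⟩⟩
  -- the real basis
  have hcardR : Fintype.card (Fin n) = Module.finrank ℝ (Fin n → ℝ) := by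
    simp [Module.finrank_fin_fun]
  set b : Module.Basis (Fin n) ℝ (Fin n → ℝ) := basisOfLinearIndependentOfCardEqFinrank hbasis hcardR
    with hbdef
  have hb : ⇑b = a := coe_basisOfLinearIndependentOfCardEqFinrank hbasis hcardR
  have hratrep := rat_coords a haQ hbasis b hb
  have hsumrep : ∀ w : Fin n → ℝ, ∑ i, b.repr w i • a i = w := by
    intro w; rw [← hb]; exact b.sum_repr w
  -- bound on coordinate functionals
  obtain ⟨Cl, hCl1, hClb⟩ : ∃ Cl : ℝ, 1 ≤ Cl ∧ ∀ (w : Fin n → ℝ) (i), |b.repr w i| ≤ Cl * ‖w‖ := by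
    set g : Fin n → ((Fin n → ℝ) →L[ℝ] ℝ) :=
      fun i => LinearMap.toContinuousLinearMap (b.coord i) with hg
    have hgnonneg : (0:ℝ) ≤ ∑ i, ‖g i‖ := Finset.sum_nonneg fun i _ => norm_nonneg _
    refine ⟨(∑ i, ‖g i‖) + 1, by linarith, fun w i => ?_⟩
    have h1 : |b.repr w i| = ‖g i w‖ := by
      simp [hg, Real.norm_eq_abs, Module.Basis.coord_apply]
    rw [h1]
    calc ‖g i w‖ ≤ ‖g i‖ * ‖w‖ := (g i).le_opNorm w
      _ ≤ ((∑ j, ‖g j‖) + 1) * ‖w‖ := by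
          apply mul_le_mul_of_nonneg_right _ (norm_nonneg w)
          have : ‖g i‖ ≤ ∑ j, ‖g j‖ :=
            Finset.single_le_sum (fun j _ => norm_nonneg (g j)) (Finset.mem_univ i)
          linarith
  have hClpos : 0 < Cl := lt_of_lt_of_le one_pos hCl1
  set Asum : ℝ := ∑ i, ‖a i‖ with hAsum
  have hA0 : 0 ≤ Asum := Finset.sum_nonneg fun i _ => norm_nonneg _
  set L : ℝ := Cl * Asum + 1 with hLdef
  have hL1 : 1 ≤ L := by nlinarith
  have hLpos : 0 < L := lt_of_lt_of_le one_pos hL1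
  -- positive combinations of the aᵢ
  have hcomb : ∀ (t : Fin n → ℚ) (s : Finset (Fin n)), s.Nonempty → (∀ i ∈ s, 0 < t i) →
      (∑ i ∈ s, ((t i : ℝ)) • a i) ∈ C ∧ IsRatPoint (∑ i ∈ s, ((t i : ℝ)) • a i) ∧
        f (∑ i ∈ s, ((t i : ℝ)) • a i) ≤ 0 := by
    intro t s
    induction s using Finset.cons_induction with
    | empty => rintro ⟨j, hj⟩ _; exact absurd hj (by simp)
    | cons j s hjs ih =>
        intro _ hpos
        have htj : 0 < t j := hpos j (Finset.mem_cons_self j s)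
        have htjR : (0:ℝ) < (t j : ℝ) := by exact_mod_cast htj
        have hterm_mem : ((t j : ℝ)) • a j ∈ C := hcone _ (haC j) _ htjR
        have hterm_rat : IsRatPoint (((t j : ℝ)) • a j) := (haQ j).qsmul (t j)
        have hterm_f : f (((t j : ℝ)) • a j) ≤ 0 := by
          rw [hhom _ (haC j) (haQ j) (t j) htj, hzero j, mul_zero]
        rw [Finset.sum_cons]
        rcases s.eq_empty_or_nonempty with hse | hse
        · subst hse
          simpa using ⟨hterm_mem, hterm_rat, hterm_f⟩
        · obtain ⟨hmem, hrat, hf⟩ := ih hse fun i hi => hpos i (Finset.mem_cons_of_mem hi)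
          refine ⟨hadd _ hterm_mem _ hmem, hterm_rat.add hrat, ?_⟩
          calc f (((t j : ℝ)) • a j + ∑ i ∈ s, ((t i : ℝ)) • a i)
              ≤ f (((t j : ℝ)) • a j) + f (∑ i ∈ s, ((t i : ℝ)) • a i) :=
                hsub _ hterm_mem _ hmem hterm_rat hrat
            _ ≤ 0 := by linarith
  -- the point e = ∑ aᵢ
  set e : Fin n → ℝ := ∑ i, a i with hedef
  have he := hcomb (fun _ => 1) Finset.univ Finset.univ_nonempty (fun i _ => one_pos)
  have heeq : (∑ i, (((1:ℚ) : ℝ)) • a i) = e := by simp [hedef]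
  rw [heeq] at he
  obtain ⟨heC, heRat, -⟩ := he
  have hreprE : ∀ i, b.repr e i = 1 := by
    intro i
    have h1 : e = ∑ j, (fun _ : Fin n => (1:ℝ)) j • b j := by
      simp [hedef, hb]
    rw [h1, Module.Basis.repr_sum_self]
  -- radius of a ball around x inside C
  obtain ⟨δ₀, hδ₀pos, hball⟩ : ∃ δ₀ > 0, Metric.ball x δ₀ ⊆ C := Metric.isOpen_iff.mp hopen x hx
  -- small rational T
  obtain ⟨T, hT0R, hTlt⟩ := exists_rat_btwn (show (0:ℝ) < δ₀/(4*(‖e‖+1)) by positivity)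
  have hT0 : 0 < T := by exact_mod_cast hT0R
  have hTe : (T:ℝ) * ‖e‖ ≤ δ₀/4 := by
    have h := (lt_div_iff₀ (by positivity : (0:ℝ) < 4*(‖e‖+1))).mp hTlt
    nlinarith [norm_nonneg e]
  -- rational point x' near x
  obtain ⟨x', hx'rat, hx'near⟩ := exists_ratPoint_near x
    (show 0 < min (δ₀/8) ((T:ℝ)/(8*Cl)) by positivity)
  have hx'1 : ‖x' - x‖ < δ₀/8 := lt_of_lt_of_le hx'near (min_le_left _ _)
  have hx'2 : ‖x' - x‖ ≤ (T:ℝ)/(8*Cl) := le_of_lt (lt_of_lt_of_le hx'near (min_le_right _ _))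
  -- base point y₀
  set y₀ : Fin n → ℝ := x' - (T:ℝ) • e with hy₀def
  have hy₀rat : IsRatPoint y₀ := hx'rat.sub (heRat.qsmul T)
  have hy₀C : y₀ ∈ C := by
    apply hball
    rw [Metric.mem_ball, dist_eq_norm]
    have h0 : y₀ - x = (x' - x) - (T:ℝ) • e := by rw [hy₀def]; abel
    rw [h0]
    calc ‖(x' - x) - (T:ℝ) • e‖ ≤ ‖x' - x‖ + ‖(T:ℝ) • e‖ := norm_sub_le _ _
      _ = ‖x' - x‖ + (T:ℝ) * ‖e‖ := by
          rw [norm_smul, Real.norm_eq_abs, abs_of_pos hT0R]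
      _ < δ₀/8 + δ₀/4 := by linarith
      _ < δ₀ := by linarith
  set B : ℝ := f y₀ with hBdef
  have hB0 : 0 ≤ B := hnonneg _ hy₀C hy₀rat
  -- radii
  set δ' : ℝ := min (δ₀/4) ((T:ℝ)/(4*Cl)) with hδ'def
  have hδ'pos : 0 < δ' := lt_min (by positivity) (by positivity)
  have hδ'1 : δ' ≤ δ₀/4 := min_le_left _ _
  have hClδ' : Cl * δ' ≤ (T:ℝ)/4 := by
    calc Cl * δ' ≤ Cl * ((T:ℝ)/(4*Cl)) :=
          mul_le_mul_of_nonneg_left (min_le_right _ _) (le_of_lt hClpos)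
      _ = (T:ℝ)/4 := by field_simp
  set δ : ℝ := min (δ'/(8*L)) ((T:ℝ)/(8*Cl)) with hδdef
  have hδpos : 0 < δ := lt_min (by positivity) (by positivity)
  have hδa : δ ≤ δ'/(8*L) := min_le_left _ _
  have hδb : δ ≤ (T:ℝ)/(8*Cl) := min_le_right _ _
  have h2Lδ : 2 * L * δ ≤ δ'/4 := by
    have h1 : 2 * L * δ ≤ 2 * L * (δ'/(8*L)) :=
      mul_le_mul_of_nonneg_left hδa (by positivity)
    have h2 : 2 * L * (δ'/(8*L)) = δ'/4 := by field_simp; ring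
    linarith
  have hδδ' : δ ≤ δ'/8 := by
    refine le_trans hδa ?_
    apply div_le_div_of_nonneg_left (le_of_lt hδ'pos) (by norm_num)
    linarith
  have hδδ₀ : δ < δ₀ := by linarith
  have hClδ : Cl * δ ≤ (T:ℝ)/8 := by
    calc Cl * δ ≤ Cl * ((T:ℝ)/(8*Cl)) := mul_le_mul_of_nonneg_left hδb (le_of_lt hClpos)
      _ = (T:ℝ)/8 := by field_simp
  set K : Set (Fin n → ℝ) := Metric.closedBall x δ with hKdef
  have hKball : ∀ y ∈ K, ‖y - x‖ ≤ δ := by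
    intro y hy
    rw [hKdef, Metric.mem_closedBall, dist_eq_norm] at hy
    exact hy
  have hKC : K ⊆ C := by
    intro y hy
    apply hball
    rw [Metric.mem_ball, dist_eq_norm]
    exact lt_of_le_of_lt (hKball y hy) hδδ₀
  set M : ℝ := 2*L*B/δ' + 1 with hMdef
  have hMpos : 0 < M := by positivity
  -- upper bound for f at rational points D-above y₀
  have hUB : ∀ p : Fin n → ℝ, p ∈ C → IsRatPoint p → (∀ i, 0 ≤ b.repr (p - y₀) i) →
      f p ≤ B := by
    intro p hpC hpRat hcoord
    have hdrat : IsRatPoint (p - y₀) := hpRat.sub hy₀rat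
    obtain ⟨c, hc⟩ := hratrep (p - y₀) hdrat
    have hc0 : ∀ i, 0 ≤ c i := by
      intro i
      have h := hcoord i
      rw [hc i] at h
      exact_mod_cast h
    by_cases hd0 : p - y₀ = 0
    · rw [sub_eq_zero.mp hd0]
    · have hdsum : p - y₀ = ∑ i, ((c i : ℝ)) • a i := by
        rw [← hsumrep (p - y₀)]
        exact Finset.sum_congr rfl fun i _ => by rw [hc i]
      set s : Finset (Fin n) := Finset.univ.filter (fun i => 0 < c i) with hsdef
      have hdsum' : p - y₀ = ∑ i ∈ s, ((c i : ℝ)) • a i := by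
        rw [hdsum]
        refine (Finset.sum_subset (Finset.subset_univ s) fun i _ hi => ?_).symm
        have h1 : ¬ 0 < c i := fun h => hi (by simp [hsdef, h])
        have h2 : c i = 0 := le_antisymm (not_lt.mp h1) (hc0 i)
        simp [h2]
      have hsne : s.Nonempty := by
        by_contra hse
        rw [Finset.not_nonempty_iff_eq_empty] at hse
        exact hd0 (by rw [hdsum', hse, Finset.sum_empty])
      obtain ⟨hdC, hdRat, hdf⟩ := hcomb c s hsne fun i hi => (Finset.mem_filter.mp hi).2
      rw [← hdsum'] at hdC hdRat hdf
      have hpd : p = y₀ + (p - y₀) := by abel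
      calc f p = f (y₀ + (p - y₀)) := by rw [← hpd]
        _ ≤ f y₀ + f (p - y₀) := hsub _ hy₀C _ hdC hy₀rat hdrat
        _ ≤ B := by rw [hBdef]; linarith
  -- norm bound for coefficient sums
  have hbound : ∀ (s : Finset (Fin n)) (t : Fin n → ℚ) (r : ℝ), 0 ≤ r →
      (∀ i ∈ s, |(t i : ℝ)| ≤ Cl * r) → ‖∑ i ∈ s, ((t i : ℝ)) • a i‖ ≤ L * r := by
    intro s t r hr ht
    calc ‖∑ i ∈ s, ((t i : ℝ)) • a i‖ ≤ ∑ i ∈ s, ‖((t i : ℝ)) • a i‖ := norm_sum_le _ _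
      _ = ∑ i ∈ s, |(t i : ℝ)| * ‖a i‖ := by
          refine Finset.sum_congr rfl fun i _ => ?_
          rw [norm_smul, Real.norm_eq_abs]
      _ ≤ ∑ i ∈ s, (Cl * r) * ‖a i‖ :=
          Finset.sum_le_sum fun i hi => mul_le_mul_of_nonneg_right (ht i hi) (norm_nonneg _)
      _ ≤ ∑ i, (Cl * r) * ‖a i‖ := by
          refine Finset.sum_le_sum_of_subset_of_nonneg (Finset.subset_univ s) fun i _ _ => ?_
          exact mul_nonneg (mul_nonneg (le_of_lt hClpos) hr) (norm_nonneg _)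
      _ = (Cl * Asum) * r := by rw [hAsum, ← Finset.mul_sum]; ring
      _ ≤ L * r := by
          apply mul_le_mul_of_nonneg_right _ hr
          rw [hLdef]; linarith
  -- the main one-sided estimate
  have hmain : ∀ x₁ ∈ K, ∀ x₂ ∈ K, IsRatPoint x₁ → IsRatPoint x₂ →
      f x₁ - f x₂ ≤ M * ‖x₂ - x₁‖ := by
    intro x₁ hK₁ x₂ hK₂ hrat₁ hrat₂
    have hx₁C : x₁ ∈ C := hKC hK₁
    have hx₂C : x₂ ∈ C := hKC hK₂
    set w : Fin n → ℝ := x₂ - x₁ with hwdef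
    have hwrat : IsRatPoint w := hrat₂.sub hrat₁
    have hwnorm : ‖w‖ ≤ 2 * δ := by
      calc ‖w‖ = ‖(x₂ - x) - (x₁ - x)‖ := by rw [hwdef]; congr 1; abel
        _ ≤ ‖x₂ - x‖ + ‖x₁ - x‖ := norm_sub_le _ _
        _ ≤ 2 * δ := by
            have h1 := hKball x₁ hK₁; have h2 := hKball x₂ hK₂; linarith
    obtain ⟨c, hc⟩ := hratrep w hwrat
    have hcabs : ∀ i, |(c i : ℝ)| ≤ Cl * ‖w‖ := by
      intro i; rw [← hc i]; exact hClb w i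
    set spos : Finset (Fin n) := Finset.univ.filter (fun i => 0 < c i) with hsposdef
    set sneg : Finset (Fin n) := Finset.univ.filter (fun i => c i < 0) with hsnegdef
    set tneg : Fin n → ℚ := fun i => -c i with htnegdef
    set u : Fin n → ℝ := ∑ i ∈ spos, ((c i : ℝ)) • a i with hudef
    set v : Fin n → ℝ := ∑ i ∈ sneg, ((tneg i : ℝ)) • a i with hvdef
    have hw_univ : w = ∑ i, ((c i : ℝ)) • a i := by
      rw [← hsumrep w]
      exact Finset.sum_congr rfl fun i _ => by rw [hc i]
    have hwuv : w = u - v := by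
      have h1 : ∑ i, ((c i : ℝ)) • a i
          = u + ∑ i ∈ Finset.univ.filter (fun i => ¬ 0 < c i), ((c i : ℝ)) • a i := by
        rw [hudef, hsposdef]
        exact (Finset.sum_filter_add_sum_filter_not _ _ _).symm
      have h2 : ∑ i ∈ Finset.univ.filter (fun i => ¬ 0 < c i), ((c i : ℝ)) • a i
          = ∑ i ∈ sneg, ((c i : ℝ)) • a i := by
        refine (Finset.sum_subset (fun i hi => ?_) (fun i hit his => ?_)).symm
        · rw [hsnegdef, Finset.mem_filter] at hi
          simp only [Finset.mem_filter, Finset.mem_univ, true_and]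
          exact not_lt.mpr (le_of_lt hi.2)
        · have h3 : ¬ c i < 0 := fun h => his (by simp [hsnegdef, h])
          have h4 : ¬ 0 < c i := by
            simp only [Finset.mem_filter, Finset.mem_univ, true_and] at hit
            exact hit
          have h5 : c i = 0 := le_antisymm (not_lt.mp h4) (not_lt.mp h3)
          simp [h5]
      have h3 : ∑ i ∈ sneg, ((c i : ℝ)) • a i = -v := by
        rw [hvdef, ← Finset.sum_neg_distrib]
        refine Finset.sum_congr rfl fun i _ => ?_
        rw [htnegdef]
        push_cast
        rw [neg_smul, neg_neg]
      rw [hw_univ, h1, h2, h3, sub_eq_add_neg]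
    have huv : x₁ + u = x₂ + v := by
      have h := hwuv
      rw [hwdef] at h
      have h2 := sub_eq_sub_iff_add_eq_add.mp h
      rw [h2, add_comm]
    have hnormu : ‖u‖ ≤ L * ‖w‖ := hbound spos c ‖w‖ (norm_nonneg w) fun i _ => hcabs i
    have hnormv : ‖v‖ ≤ L * ‖w‖ := by
      refine hbound sneg tneg ‖w‖ (norm_nonneg w) fun i _ => ?_
      rw [htnegdef]
      push_cast
      rw [abs_neg]
      exact hcabs i
    have hfv : f (x₂ + v) ≤ f x₂ := by
      by_cases hv0 : v = 0
      · rw [hv0, add_zero]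
      · have hsnegne : sneg.Nonempty := by
          by_contra hse
          rw [Finset.not_nonempty_iff_eq_empty] at hse
          exact hv0 (by rw [hvdef, hse, Finset.sum_empty])
        obtain ⟨hvC, hvRat, hvf⟩ := hcomb tneg sneg hsnegne fun i hi => by
          rw [htnegdef]
          have := (Finset.mem_filter.mp hi).2
          simp only
          linarith
        rw [← hvdef] at hvC hvRat hvf
        have h := hsub _ hx₂C _ hvC hrat₂ hvRat
        linarith
    by_cases hu0 : u = 0
    · have hx12 : x₁ = x₂ + v := by rw [← huv, hu0, add_zero]
      have h5 : f x₁ ≤ f x₂ := by rw [hx12]; exact hfv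
      have h6 : 0 ≤ M * ‖w‖ := by positivity
      linarith
    · have hsposne : spos.Nonempty := by
        by_contra hse
        rw [Finset.not_nonempty_iff_eq_empty] at hse
        exact hu0 (by rw [hudef, hse, Finset.sum_empty])
      obtain ⟨huC, huRat, huf⟩ := hcomb c spos hsposne fun i hi => (Finset.mem_filter.mp hi).2
      rw [← hudef] at huC huRat huf
      have hupos : 0 < ‖u‖ := norm_pos_iff.mpr hu0
      have husmall : ‖u‖ ≤ δ'/4 := by
        calc ‖u‖ ≤ L * ‖w‖ := hnormu
          _ ≤ L * (2*δ) := mul_le_mul_of_nonneg_left hwnorm (le_of_lt hLpos)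
          _ = 2*L*δ := by ring
          _ ≤ δ'/4 := h2Lδ
      have hlt : ‖u‖/δ' < min (2*‖u‖/δ') (1/2) := by
        apply lt_min
        · rw [div_lt_div_iff₀ hδ'pos hδ'pos]
          nlinarith
        · rw [div_lt_iff₀ hδ'pos]; linarith
      obtain ⟨θ, hθlb, hθub⟩ := exists_rat_btwn hlt
      have hθposR : (0:ℝ) < (θ:ℝ) := lt_of_le_of_lt (by positivity) hθlb
      have hθpos : 0 < θ := by exact_mod_cast hθposR
      have hθ2 : (θ:ℝ) < 2*‖u‖/δ' := lt_of_lt_of_le hθub (min_le_left _ _)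
      have hθhalf : (θ:ℝ) < 1/2 := lt_of_lt_of_le hθub (min_le_right _ _)
      set lam : ℚ := 1 - θ with hlamdef
      have hlamposR : (0:ℝ) < (lam:ℝ) := by
        rw [hlamdef]; push_cast; linarith
      have hlampos : 0 < lam := by exact_mod_cast hlamposR
      have hlamle1 : (lam:ℝ) ≤ 1 := by
        rw [hlamdef]; push_cast; linarith
      set sq : ℚ := lam / θ with hsqdef
      have hsqR : (sq:ℝ) = (lam:ℝ)/(θ:ℝ) := by rw [hsqdef]; push_cast; ring
      have hsq0 : (0:ℝ) ≤ (sq:ℝ) := by rw [hsqR]; positivity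
      have hsunorm : ‖(sq:ℝ) • u‖ < δ' := by
        rw [norm_smul, Real.norm_eq_abs, abs_of_nonneg hsq0]
        have h1 : ‖u‖ < (θ:ℝ) * δ' := (div_lt_iff₀ hδ'pos).mp hθlb
        have h2 : (sq:ℝ) ≤ 1/(θ:ℝ) := by
          rw [hsqR, div_le_div_iff₀ hθposR hθposR]
          nlinarith
        calc (sq:ℝ) * ‖u‖ ≤ (1/(θ:ℝ)) * ‖u‖ := mul_le_mul_of_nonneg_right h2 (norm_nonneg u)
          _ < δ' := by
              rw [one_div, inv_mul_lt_iff₀ hθposR]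
              linarith
      set p : Fin n → ℝ := x₁ - (sq:ℝ) • u with hpdef
      have hpx : ‖p - x‖ < δ₀ := by
        have h0 : p - x = (x₁ - x) - (sq:ℝ) • u := by rw [hpdef]; abel
        rw [h0]
        calc ‖(x₁ - x) - (sq:ℝ) • u‖ ≤ ‖x₁ - x‖ + ‖(sq:ℝ) • u‖ := norm_sub_le _ _
          _ < δ + δ' := by
              have := hKball x₁ hK₁; linarith
          _ < δ₀ := by linarith
      have hpC : p ∈ C := hball (by rw [Metric.mem_ball, dist_eq_norm]; exact hpx)
      have hpRat : IsRatPoint p := hrat₁.sub (huRat.qsmul sq)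
      have hpcoord : ∀ i, 0 ≤ b.repr (p - y₀) i := by
        intro i
        have hdec : p - y₀ = (x₁ - x') + ((T:ℝ) • e - (sq:ℝ) • u) := by
          rw [hpdef, hy₀def]; abel
        have hrepr : b.repr (p - y₀) i
            = b.repr (x₁ - x') i + ((T:ℝ) * b.repr e i - b.repr ((sq:ℝ) • u) i) := by
          rw [hdec, map_add, map_sub, map_smul]
          simp [Finsupp.add_apply, Finsupp.sub_apply, Finsupp.smul_apply, smul_eq_mul]
        have h1 : |b.repr (x₁ - x') i| ≤ Cl * ‖x₁ - x'‖ := hClb _ i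
        have h2 : ‖x₁ - x'‖ ≤ δ + (T:ℝ)/(8*Cl) := by
          calc ‖x₁ - x'‖ = ‖(x₁ - x) - (x' - x)‖ := by congr 1; abel
            _ ≤ ‖x₁ - x‖ + ‖x' - x‖ := norm_sub_le _ _
            _ ≤ δ + (T:ℝ)/(8*Cl) := add_le_add (hKball x₁ hK₁) hx'2
        have h3 : |b.repr ((sq:ℝ) • u) i| ≤ Cl * δ' := by
          calc |b.repr ((sq:ℝ) • u) i| ≤ Cl * ‖(sq:ℝ) • u‖ := hClb _ i
            _ ≤ Cl * δ' := mul_le_mul_of_nonneg_left (le_of_lt hsunorm) (le_of_lt hClpos)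
        have h4 : Cl * ‖x₁ - x'‖ ≤ Cl * δ + (T:ℝ)/8 := by
          have h5 := mul_le_mul_of_nonneg_left h2 (le_of_lt hClpos)
          have h6 : Cl * ((T:ℝ)/(8*Cl)) = (T:ℝ)/8 := by field_simp
          rw [mul_add, h6] at h5
          exact h5
        rw [hrepr, hreprE i, mul_one]
        have ha1 : -(Cl * δ + (T:ℝ)/8) ≤ b.repr (x₁ - x') i := by
          have h7 := neg_abs_le (b.repr (x₁ - x') i)
          linarith
        have ha2 : b.repr ((sq:ℝ) • u) i ≤ Cl * δ' := le_trans (le_abs_self _) h3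
        linarith
      have hfp : f p ≤ B := hUB p hpC hpRat hpcoord
      have hx1uC : x₁ + u ∈ C := hadd _ hx₁C _ huC
      have hx1uRat : IsRatPoint (x₁ + u) := hrat₁.add huRat
      have hθne : (θ:ℝ) ≠ 0 := ne_of_gt hθposR
      have hts : (θ:ℝ) * (sq:ℝ) = (lam:ℝ) := by
        rw [hsqR]; field_simp
      have hlt1 : (lam:ℝ) + (θ:ℝ) = 1 := by
        rw [hlamdef]; push_cast; ring
      have hid : (lam:ℝ) • (x₁ + u) + (θ:ℝ) • p = x₁ := by
        rw [hpdef, smul_add, smul_sub, smul_smul, hts]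
        have h8 : (lam:ℝ) • x₁ + (lam:ℝ) • u + ((θ:ℝ) • x₁ - (lam:ℝ) • u)
            = ((lam:ℝ) + (θ:ℝ)) • x₁ := by
          rw [add_smul]; abel
        rw [h8, hlt1, one_smul]
      have hmem1 : (lam:ℝ) • (x₁ + u) ∈ C := hcone _ hx1uC _ hlamposR
      have hmem2 : (θ:ℝ) • p ∈ C := hcone _ hpC _ hθposR
      have hstep := hsub _ hmem1 _ hmem2 (hx1uRat.qsmul lam) (hpRat.qsmul θ)
      rw [hid] at hstep
      rw [hhom _ hx1uC hx1uRat lam hlampos, hhom _ hpC hpRat θ hθpos] at hstep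
      have hfx1u : 0 ≤ f (x₁ + u) := hnonneg _ hx1uC hx1uRat
      have hstep2 : (lam:ℝ) * f (x₁ + u) ≤ f (x₁ + u) := by nlinarith
      have hstep3 : f (x₁ + u) ≤ f x₂ := by rw [huv]; exact hfv
      have hstep4 : (θ:ℝ) * f p ≤ M * ‖w‖ := by
        have h1 : (θ:ℝ) * f p ≤ (θ:ℝ) * B := mul_le_mul_of_nonneg_left hfp (le_of_lt hθposR)
        have h2 : (θ:ℝ) * B ≤ (2*‖u‖/δ') * B := mul_le_mul_of_nonneg_right (le_of_lt hθ2) hB0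
        have h3 : (2*‖u‖/δ') * B ≤ (2*(L*‖w‖)/δ') * B := by
          apply mul_le_mul_of_nonneg_right _ hB0
          gcongr
        have h4 : (2*(L*‖w‖)/δ') * B = (2*L*B/δ') * ‖w‖ := by ring
        have h5 : (2*L*B/δ') * ‖w‖ ≤ M * ‖w‖ := by
          apply mul_le_mul_of_nonneg_right _ (norm_nonneg w)
          rw [hMdef]; linarith
        calc (θ:ℝ) * f p ≤ (θ:ℝ) * B := h1
          _ ≤ (2*‖u‖/δ') * B := h2
          _ ≤ (2*(L*‖w‖)/δ') * B := h3
          _ = (2*L*B/δ') * ‖w‖ := h4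
          _ ≤ M * ‖w‖ := h5
      linarith
  refine ⟨K, isCompact_closedBall x δ, hKC, Metric.closedBall_mem_nhds x hδpos, M, hMpos, ?_⟩
  intro x₁ h1 x₂ h2 r1 r2
  rw [abs_sub_le_iff]
  constructor
  · have h := hmain x₁ h1 x₂ h2 r1 r2
    rwa [norm_sub_rev] at h
  · exact hmain x₂ h2 x₁ h1 r2 r1
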